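/- Let E be a finite collection of measurable sets, totally ordered by <, such that μ({x ∈ R : h_{E_{≤R}}(x) > K}) ≤ η μ(R) for all R ∈ E, where η ∈ (0,1). Then for any γ with 0 < γ < 1−η and any integer N ≥ K(1−η)/(1−η−γ), the collection E can be partitioned into N subcollections E_1, …, E_N such that for each i and each R ∈ E_i, μ(R ∩ sh({S ∈ E_i : S < R})) ≤ (1−γ) μ(R). -/

import Mathlib

open MeasureTheory Set
open scoped ENNReal

/-- The counting lemma: if `m` is the maximum of `s`, then for any coloring `f` of the
earlier sets, some color class has small overlap with `E m`. -/
lemma stmt8_exists_good_color {X : Type*} [MeasurableSpace X] (μ : Measure X)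
    {ι : Type*} [LinearOrder ι] (s : Finset ι) (E : ι → Set X)
    (hmeas : ∀ i ∈ s, MeasurableSet (E i))
    (K η γ : ℝ≥0∞) (hη1 : η < 1) (hγ : γ < 1 - η)
    (N : ℕ) (hN1 : 1 ≤ N) (hN : K * (1 - η) / (1 - η - γ) ≤ (N : ℝ≥0∞))
    (m : ι) (hm : m ∈ s) (hmax : ∀ j ∈ s, j ≤ m)
    (horder : μ {x ∈ E m |
        K < ∑ j ∈ s.filter (fun j => j ≤ m), (E j).indicator (1 : X → ℝ≥0∞) x} ≤
      η * μ (E m))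
    (f : ι → Fin N) :
    ∃ c : Fin N,
      μ (E m ∩ ⋃ j ∈ (s.erase m).filter (fun j => f j = c), E j) ≤
        (1 - γ) * μ (E m) := by
  -- arithmetic preliminaries
  have hd0 : (1 : ℝ≥0∞) - η - γ ≠ 0 := (tsub_pos_of_lt hγ).ne'
  have hdt : (1 : ℝ≥0∞) - η - γ ≠ ⊤ :=
    ne_top_of_le_ne_top ENNReal.one_ne_top (le_trans tsub_le_self tsub_le_self)
  have hKd : K * (1 - η) ≤ (N : ℝ≥0∞) * (1 - η - γ) := by
    rwa [ENNReal.div_le_iff hd0 hdt] at hN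
  have h1η0 : (1 : ℝ≥0∞) - η ≠ 0 := (tsub_pos_of_lt hη1).ne'
  have h1ηt : (1 : ℝ≥0∞) - η ≠ ⊤ := ne_top_of_le_ne_top ENNReal.one_ne_top tsub_le_self
  have hKN : K ≤ (N : ℝ≥0∞) := by
    have h2 : (N : ℝ≥0∞) * (1 - η - γ) ≤ (N : ℝ≥0∞) * (1 - η) :=
      mul_le_mul_right tsub_le_self _
    have := hKd.trans h2
    rw [mul_comm K, mul_comm (N : ℝ≥0∞)] at this
    exact (ENNReal.mul_le_mul_iff_right h1η0 h1ηt).mp this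
  have hK1N : K - 1 ≤ (N : ℝ≥0∞) := le_trans tsub_le_self hKN
  set T := E m with hTdef
  have hT : MeasurableSet T := hmeas m hm
  set g : X → ℝ≥0∞ := fun x => ∑ j ∈ s.filter (fun j => j ≤ m), (E j).indicator 1 x with hg
  have hgmeas : Measurable g :=
    Finset.measurable_sum _ fun j hj =>
      (measurable_const.indicator (hmeas j (Finset.mem_filter.mp hj).1))
  set A : Set X := {x ∈ T | K < g x} with hAdef
  have hA : MeasurableSet A := hT.inter (hgmeas measurableSet_Ioi)
  set B : Set X := T \ A with hBdef
  have hB : MeasurableSet B := hT.diff hA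
  have hAsub : A ⊆ T := fun x hx => hx.1
  have hab : μ B + μ A = μ T := by
    have := measure_diff_add_inter (μ := μ) T hA
    rwa [Set.inter_eq_self_of_subset_right hAsub] at this
  have ha : μ A ≤ η * μ T := horder
  -- the color classes
  set V : Fin N → Set X := fun c => ⋃ j ∈ (s.erase m).filter (fun j => f j = c), E j with hV
  have hVmeas : ∀ c, MeasurableSet (V c) := by
    intro c
    exact Finset.measurableSet_biUnion _ fun j hj =>
      hmeas j (Finset.mem_of_mem_erase (Finset.mem_filter.mp hj).1)
  -- pointwise bound on B
  have hpt : ∀ x ∈ B, (∑ j ∈ s.erase m, (E j).indicator (1 : X → ℝ≥0∞) x) ≤ K - 1 := by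
    intro x hx
    have hxT : x ∈ T := hx.1
    have hxg : g x ≤ K := by
      by_contra hlt
      exact hx.2 ⟨hxT, lt_of_not_ge hlt⟩
    have hfilter : s.filter (fun j => j ≤ m) = s :=
      Finset.filter_true_of_mem fun j hj => hmax j hj
    have hgx : g x = ∑ j ∈ s, (E j).indicator (1 : X → ℝ≥0∞) x := by
      simp only [hg, hfilter]
    have hsplit := Finset.add_sum_erase s (fun j => (E j).indicator (1 : X → ℝ≥0∞) x) hm
    have hxm : (E m).indicator (1 : X → ℝ≥0∞) x = 1 := by
      rw [Set.indicator_of_mem hxT, Pi.one_apply]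
    simp only [hxm] at hsplit
    refine ENNReal.le_sub_of_add_le_left ENNReal.one_ne_top ?_
    rw [hsplit]
    rw [hgx] at hxg
    exact hxg
  -- sum over colors bound
  have hBsum : ∑ c : Fin N, μ (B ∩ V c) ≤ (K - 1) * μ B := by
    have step1 : ∀ c : Fin N, μ (B ∩ V c) ≤
        ∑ j ∈ (s.erase m).filter (fun j => f j = c), μ (B ∩ E j) := by
      intro c
      rw [hV, Set.inter_iUnion₂]
      exact measure_biUnion_finset_le _ _
    calc ∑ c : Fin N, μ (B ∩ V c)
        ≤ ∑ c : Fin N, ∑ j ∈ (s.erase m).filter (fun j => f j = c), μ (B ∩ E j) :=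
          Finset.sum_le_sum fun c _ => step1 c
      _ = ∑ j ∈ s.erase m, μ (B ∩ E j) :=
          Finset.sum_fiberwise (s.erase m) f (fun j => μ (B ∩ E j))
      _ = ∫⁻ x in B, ∑ j ∈ s.erase m, (E j).indicator (1 : X → ℝ≥0∞) x ∂μ := by
          rw [lintegral_finset_sum]
          · refine Finset.sum_congr rfl fun j hj => ?_
            have hmj : MeasurableSet (E j) := hmeas j (Finset.mem_of_mem_erase hj)
            rw [lintegral_indicator_one hmj, Measure.restrict_apply hmj, Set.inter_comm]
          · exact fun j hj =>
              measurable_const.indicator (hmeas j (Finset.mem_of_mem_erase hj))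
      _ ≤ ∫⁻ _ in B, (K - 1) ∂μ := setLIntegral_mono' hB hpt
      _ = (K - 1) * μ B := setLIntegral_const _ _
  have hsum : ∑ c : Fin N, μ (T ∩ V c) ≤ (N : ℝ≥0∞) * μ A + (K - 1) * μ B := by
    have h1 : ∀ c : Fin N, μ (T ∩ V c) = μ (A ∩ V c) + μ (B ∩ V c) := by
      intro c
      have hTAB : T ∩ V c = (A ∩ V c) ∪ (B ∩ V c) := by
        rw [← Set.union_inter_distrib_right, Set.union_diff_cancel hAsub]
      rw [hTAB, measure_union ?_ (hB.inter (hVmeas c))]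
      exact (disjoint_sdiff_self_right.mono_left Set.inter_subset_left).mono_right
        Set.inter_subset_left
    calc ∑ c : Fin N, μ (T ∩ V c)
        = ∑ c : Fin N, μ (A ∩ V c) + ∑ c : Fin N, μ (B ∩ V c) := by
          rw [← Finset.sum_add_distrib]; exact Finset.sum_congr rfl fun c _ => h1 c
      _ ≤ ∑ _c : Fin N, μ A + (K - 1) * μ B :=
          add_le_add (Finset.sum_le_sum fun c _ => measure_mono Set.inter_subset_left) hBsum
      _ = (N : ℝ≥0∞) * μ A + (K - 1) * μ B := by
          rw [Finset.sum_const, Finset.card_univ, Fintype.card_fin, nsmul_eq_mul]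
  -- arithmetic: the upper bound is at most N * ((1-γ) * μ T)
  have harith : (N : ℝ≥0∞) * μ A + (K - 1) * μ B ≤ (N : ℝ≥0∞) * ((1 - γ) * μ T) := by
    have hNsplit : ((K - 1) + ((N : ℝ≥0∞) - (K - 1))) = (N : ℝ≥0∞) := by
      rw [add_comm]; exact tsub_add_cancel_of_le hK1N
    have e1 : (N : ℝ≥0∞) * μ A + (K - 1) * μ B
        = (K - 1) * (μ B + μ A) + ((N : ℝ≥0∞) - (K - 1)) * μ A := by
      conv_lhs => rw [← hNsplit]
      ring
    have e2 : (K - 1) * (μ B + μ A) + ((N : ℝ≥0∞) - (K - 1)) * μ A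
        ≤ (K - 1) * μ T + ((N : ℝ≥0∞) - (K - 1)) * (η * μ T) := by
      rw [hab]
      exact add_le_add_right (mul_le_mul_right ha _) _
    have e3 : (K - 1) * μ T + ((N : ℝ≥0∞) - (K - 1)) * (η * μ T)
        = ((K - 1) + ((N : ℝ≥0∞) - (K - 1)) * η) * μ T := by ring
    have key : (K - 1) + ((N : ℝ≥0∞) - (K - 1)) * η ≤ (N : ℝ≥0∞) * (1 - γ) := by
      have hKsplit : (K - 1) = (K - 1) * (1 - η) + (K - 1) * η := by
        rw [← mul_add, tsub_add_cancel_of_le hη1.le, mul_one]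
      have h1γ : (1 : ℝ≥0∞) - γ = (1 - η - γ) + η := by
        rw [ENNReal.sub_add_eq_add_sub hγ.le (ne_top_of_le_ne_top ENNReal.one_ne_top (le_trans hγ.le tsub_le_self)), tsub_add_cancel_of_le hη1.le]
      have hη' : (K - 1) * η + ((N : ℝ≥0∞) - (K - 1)) * η = (N : ℝ≥0∞) * η := by
        rw [← add_mul, hNsplit]
      calc (K - 1) + ((N : ℝ≥0∞) - (K - 1)) * η
          = (K - 1) * (1 - η) + (K - 1) * η + ((N : ℝ≥0∞) - (K - 1)) * η := by
            nth_rewrite 1 [hKsplit]; rfl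
        _ = (K - 1) * (1 - η) + (N : ℝ≥0∞) * η := by rw [add_assoc, hη']
        _ ≤ (N : ℝ≥0∞) * (1 - η - γ) + (N : ℝ≥0∞) * η :=
            add_le_add_left ((mul_le_mul_left tsub_le_self _).trans hKd) _
        _ = (N : ℝ≥0∞) * (1 - γ) := by rw [h1γ, mul_add]
    calc (N : ℝ≥0∞) * μ A + (K - 1) * μ B
        ≤ ((K - 1) + ((N : ℝ≥0∞) - (K - 1)) * η) * μ T := by rw [e1, ← e3]; exact e2
      _ ≤ ((N : ℝ≥0∞) * (1 - γ)) * μ T := mul_le_mul_left key _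
      _ = (N : ℝ≥0∞) * ((1 - γ) * μ T) := by ring
  -- pick the color with minimal overlap
  have : Nonempty (Fin N) := ⟨⟨0, hN1⟩⟩
  obtain ⟨c₀, -, hc₀⟩ := Finset.exists_min_image Finset.univ
    (fun c => μ (T ∩ V c)) Finset.univ_nonempty
  refine ⟨c₀, ?_⟩
  have h1 : (N : ℝ≥0∞) * μ (T ∩ V c₀) ≤ ∑ c : Fin N, μ (T ∩ V c) := by
    calc (N : ℝ≥0∞) * μ (T ∩ V c₀) = ∑ _c : Fin N, μ (T ∩ V c₀) := by
          simp [Finset.sum_const, Finset.card_univ, nsmul_eq_mul]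
      _ ≤ ∑ c : Fin N, μ (T ∩ V c) :=
          Finset.sum_le_sum fun c _ => hc₀ c (Finset.mem_univ c)
  have h2 : (N : ℝ≥0∞) * μ (T ∩ V c₀) ≤ (N : ℝ≥0∞) * ((1 - γ) * μ T) :=
    h1.trans (hsum.trans harith)
  have hN0 : (N : ℝ≥0∞) ≠ 0 := Nat.cast_ne_zero.mpr (by omega)
  exact (ENNReal.mul_le_mul_iff_right hN0 (ENNReal.natCast_ne_top N)).mp h2

/-- Main induction: coloring exists for any finite family. -/
lemma stmt8_aux {X : Type*} [MeasurableSpace X] (μ : Measure X)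
    {ι : Type*} [LinearOrder ι] (E : ι → Set X)
    (K η γ : ℝ≥0∞) (hη1 : η < 1) (hγ : γ < 1 - η)
    (N : ℕ) (hN1 : 1 ≤ N) (hN : K * (1 - η) / (1 - η - γ) ≤ (N : ℝ≥0∞)) :
    ∀ n (s : Finset ι), s.card ≤ n →
      (∀ i ∈ s, MeasurableSet (E i)) →
      (∀ i ∈ s,
        μ {x ∈ E i |
            K < ∑ j ∈ s.filter (fun j => j ≤ i), (E j).indicator (1 : X → ℝ≥0∞) x} ≤
          η * μ (E i)) →
      ∃ f : ι → Fin N, ∀ i ∈ s,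
        μ (E i ∩ ⋃ j ∈ s.filter (fun j => f j = f i ∧ j < i), E j) ≤
          (1 - γ) * μ (E i) := by
  intro n
  induction n with
  | zero =>
    intro s hcard _ _
    have hs : s = ∅ := Finset.card_eq_zero.mp (Nat.le_zero.mp hcard)
    exact ⟨fun _ => ⟨0, hN1⟩, by simp [hs]⟩
  | succ n ih =>
    intro s hcard hmeas horder
    rcases s.eq_empty_or_nonempty with rfl | hne
    · exact ⟨fun _ => ⟨0, hN1⟩, by simp⟩
    set m := s.max' hne with hmdef
    have hm : m ∈ s := s.max'_mem hne
    have hmax : ∀ j ∈ s, j ≤ m := fun j hj => s.le_max' j hj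
    set s' := s.erase m with hs'def
    have hcard' : s'.card ≤ n := by
      rw [hs'def, Finset.card_erase_of_mem hm]
      omega
    have hmeas' : ∀ i ∈ s', MeasurableSet (E i) :=
      fun i hi => hmeas i (Finset.mem_of_mem_erase hi)
    have horder' : ∀ i ∈ s',
        μ {x ∈ E i |
            K < ∑ j ∈ s'.filter (fun j => j ≤ i), (E j).indicator (1 : X → ℝ≥0∞) x} ≤
          η * μ (E i) := by
      intro i hi
      refine le_trans (measure_mono ?_) (horder i (Finset.mem_of_mem_erase hi))
      intro x hx
      refine ⟨hx.1, lt_of_lt_of_le hx.2 ?_⟩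
      exact Finset.sum_le_sum_of_subset
        (Finset.filter_subset_filter _ (Finset.erase_subset _ _))
    obtain ⟨f, hf⟩ := ih s' hcard' hmeas' horder'
    obtain ⟨c, hc⟩ := stmt8_exists_good_color μ s E hmeas K η γ hη1 hγ N hN1 hN
      m hm hmax (horder m hm) f
    refine ⟨Function.update f m c, ?_⟩
    intro i hi
    by_cases him : i = m
    · subst him
      have hfe : s.filter (fun j => Function.update f m c j = Function.update f m c m ∧ j < m)
          = s'.filter (fun j => f j = c) := by
        ext j
        simp only [Finset.mem_filter, hs'def, Finset.mem_erase]
        constructor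
        · rintro ⟨hjs, hfj, hji⟩
          refine ⟨⟨ne_of_lt hji, hjs⟩, ?_⟩
          rw [Function.update_of_ne (ne_of_lt hji)] at hfj
          rw [hfj, Function.update_self]
        · rintro ⟨⟨hjm, hjs⟩, hfj⟩
          refine ⟨hjs, ?_, lt_of_le_of_ne (hmax j hjs) hjm⟩
          rw [Function.update_of_ne hjm, Function.update_self, hfj]
      rw [hfe]
      exact hc
    · have hi' : i ∈ s' := Finset.mem_erase.mpr ⟨him, hi⟩
      have him' : i < m := lt_of_le_of_ne (hmax i hi) him
      have hfe : s.filter (fun j => Function.update f m c j = Function.update f m c i ∧ j < i)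
          = s'.filter (fun j => f j = f i ∧ j < i) := by
        ext j
        simp only [Finset.mem_filter, hs'def, Finset.mem_erase]
        constructor
        · rintro ⟨hjs, hfj, hji⟩
          have hjm : j ≠ m := ne_of_lt (lt_trans hji him')
          refine ⟨⟨hjm, hjs⟩, ?_, hji⟩
          rwa [Function.update_of_ne hjm, Function.update_of_ne him] at hfj
        · rintro ⟨⟨hjm, hjs⟩, hfj, hji⟩
          refine ⟨hjs, ?_, hji⟩
          rwa [Function.update_of_ne hjm, Function.update_of_ne him]
      rw [hfe]
      exact hf i hi'

theorem stmt8 {X : Type*} [MeasurableSpace X] (μ : Measure X)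
    {ι : Type*} [LinearOrder ι] (s : Finset ι) (E : ι → Set X)
    (hmeas : ∀ i ∈ s, MeasurableSet (E i))
    (hpos : ∀ i ∈ s, 0 < μ (E i)) (hfin : ∀ i ∈ s, μ (E i) < ⊤)
    (K η γ : ℝ≥0∞) (hη0 : 0 < η) (hη1 : η < 1) (hγ0 : 0 < γ) (hγ : γ < 1 - η)
    (horder : ∀ i ∈ s,
      μ {x ∈ E i |
          K < ∑ j ∈ s.filter (fun j => j ≤ i), (E j).indicator (1 : X → ℝ≥0∞) x} ≤
        η * μ (E i))
    (N : ℕ) (hN1 : 1 ≤ N) (hN : K * (1 - η) / (1 - η - γ) ≤ (N : ℝ≥0∞)) :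
    ∃ f : ι → Fin N, ∀ i ∈ s,
      μ (E i ∩ ⋃ j ∈ s.filter (fun j => f j = f i ∧ j < i), E j) ≤
        (1 - γ) * μ (E i) := by
  exact stmt8_aux μ E K η γ hη1 hγ N hN1 hN s.card s le_rfl hmeas horder
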